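/- Let f : 2^N → ℝ be submodular, let u ∈ N, let J be a finite index set, and for each j ∈ J let X_j ⊆ Y_j ⊆ N with u ∈ Y_j \ X_j, and let p_j ≥ 0 with Σ_{j∈J} p_j = 1. Set a_j = f(X_j ∪ {u}) − f(X_j) and b_j = f(Y_j \ {u}) − f(Y_j), and define z_j = max{0,a_j} / (max{0,a_j} + max{0,b_j}) when the denominator is nonzero and z_j = 1 otherwise, and w_j = 1 − z_j. Then Σ_j p_j (z_j a_j + w_j b_j) ≥ 2 Σ_j p_j z_j b_j and Σ_j p_j (z_j a_j + w_j b_j) ≥ 2 Σ_j p_j w_j a_j. -/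

import Mathlib

lemma canonical_pointwise (a b z w : ℝ) (hab : 0 ≤ a + b)
    (hz : z = if max 0 a + max 0 b ≠ 0 then max 0 a / (max 0 a + max 0 b) else 1)
    (hw : w = 1 - z) :
    2 * (z * b) ≤ z * a + w * b ∧ 2 * (w * a) ≤ z * a + w * b := by
  by_cases hd : max 0 a + max 0 b ≠ 0
  · rw [if_pos hd] at hz
    rcases le_or_gt a 0 with ha | ha
    · have ha' : max 0 a = 0 := max_eq_left ha
      have hb : 0 < b := by rcases lt_or_ge 0 b with h | h; exact h
                            exact absurd (by rw [ha', max_eq_left h]; ring) hd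
      have hz0 : z = 0 := by rw [hz, ha', zero_div]
      have hw1 : w = 1 := by rw [hw, hz0]; ring
      constructor <;> rw [hz0, hw1] <;> nlinarith
    · rcases le_or_gt b 0 with hb | hb
      · have hb' : max 0 b = 0 := max_eq_left hb
        have ha' : max 0 a = a := max_eq_right ha.le
        have hz1 : z = 1 := by rw [hz, ha', hb', add_zero, div_self ha.ne']
        have hw0 : w = 0 := by rw [hw, hz1]; ring
        constructor <;> rw [hz1, hw0] <;> nlinarith
      · have ha' : max 0 a = a := max_eq_right ha.le
        have hb' : max 0 b = b := max_eq_right hb.le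
        rw [ha', hb'] at hz
        have hab' : 0 < a + b := by linarith
        have hzv : z = a / (a + b) := hz
        have hwv : w = b / (a + b) := by
          rw [hw, hzv]; field_simp; ring
        rw [hzv, hwv]
        constructor
        · rw [div_mul_eq_mul_div, div_mul_eq_mul_div, div_mul_eq_mul_div,
            ← add_div, ← mul_div_assoc, div_le_div_iff₀ hab' hab']
          nlinarith [sq_nonneg (a - b)]
        · rw [div_mul_eq_mul_div, div_mul_eq_mul_div, div_mul_eq_mul_div,
            ← add_div, ← mul_div_assoc, div_le_div_iff₀ hab' hab']
          nlinarith [sq_nonneg (a - b)]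
  · push_neg at hd
    have h1 : max 0 a = 0 ∧ max 0 b = 0 := by
      constructor <;> nlinarith [le_max_left 0 a, le_max_left 0 b]
    have ha0 : a ≤ 0 := by have := h1.1; rcases max_cases 0 a with ⟨_, h⟩ | ⟨h, _⟩; exact h; linarith
    have hb0 : b ≤ 0 := by have := h1.2; rcases max_cases 0 b with ⟨_, h⟩ | ⟨h, _⟩; exact h; linarith
    have haz : a = 0 := by linarith
    have hbz : b = 0 := by linarith
    constructor <;> rw [haz, hbz] <;> ring_nf <;> norm_num

/-- The canonical fractional assignment `z_j, w_j` built from the marginals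
`a_j, b_j` satisfies both constraints of the linear formulation `(P)`. -/
theorem canonical_assignment_feasible {N J : Type*} [Fintype N] [DecidableEq N] [Fintype J]
    (f : Finset N → ℝ)
    (hsub : ∀ A B : Finset N, f (A ∩ B) + f (A ∪ B) ≤ f A + f B)
    (u : N) (X Y : J → Finset N) (p : J → ℝ)
    (hXY : ∀ j, X j ⊆ Y j) (hu : ∀ j, u ∈ Y j \ X j)
    (hp : ∀ j, 0 ≤ p j) (hp1 : ∑ j, p j = 1)
    (a b z w : J → ℝ)
    (ha : ∀ j, a j = f (insert u (X j)) - f (X j))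
    (hb : ∀ j, b j = f ((Y j).erase u) - f (Y j))
    (hz : ∀ j, z j = if max 0 (a j) + max 0 (b j) ≠ 0 then
      max 0 (a j) / (max 0 (a j) + max 0 (b j)) else 1)
    (hw : ∀ j, w j = 1 - z j) :
    (∑ j, p j * (z j * a j + w j * b j) ≥ 2 * ∑ j, p j * (z j * b j)) ∧
    (∑ j, p j * (z j * a j + w j * b j) ≥ 2 * ∑ j, p j * (w j * a j)) := by
  have hab : ∀ j, 0 ≤ a j + b j := by
    intro j
    have huY : u ∈ Y j := (Finset.mem_sdiff.mp (hu j)).1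
    have huX : u ∉ X j := (Finset.mem_sdiff.mp (hu j)).2
    have hXYe : X j ⊆ (Y j).erase u := fun x hx =>
      Finset.mem_erase.mpr ⟨fun h => huX (h ▸ hx), hXY j hx⟩
    have hcap : insert u (X j) ∩ (Y j).erase u = X j := by
      ext x
      simp only [Finset.mem_inter, Finset.mem_insert, Finset.mem_erase]
      constructor
      · rintro ⟨rfl | hx, _, _⟩
        · tauto
        · exact hx
      · intro hx
        exact ⟨Or.inr hx, fun h => huX (h ▸ hx), hXY j hx⟩
    have hcup : insert u (X j) ∪ (Y j).erase u = Y j := by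
      ext x
      simp only [Finset.mem_union, Finset.mem_insert, Finset.mem_erase]
      constructor
      · rintro ((rfl | hx) | ⟨_, hx⟩)
        · exact huY
        · exact hXY j hx
        · exact hx
      · intro hx
        by_cases hxu : x = u
        · exact Or.inl (Or.inl hxu)
        · exact Or.inr ⟨hxu, hx⟩
    have := hsub (insert u (X j)) ((Y j).erase u)
    rw [hcap, hcup] at this
    rw [ha, hb]; linarith
  have key := fun j => canonical_pointwise (a j) (b j) (z j) (w j) (hab j) (hz j) (hw j)
  constructor
  · rw [ge_iff_le, Finset.mul_sum]
    apply Finset.sum_le_sum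
    intro j _
    rw [← mul_assoc, mul_comm 2 (p j), mul_assoc]
    exact mul_le_mul_of_nonneg_left (key j).1 (hp j)
  · rw [ge_iff_le, Finset.mul_sum]
    apply Finset.sum_le_sum
    intro j _
    rw [← mul_assoc, mul_comm 2 (p j), mul_assoc]
    exact mul_le_mul_of_nonneg_left (key j).2 (hp j)
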